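/- Let G, K, L be abelian groups with distinguished nonzero elements g ∈ G, k ∈ K, l ∈ L, let f : G → K and h : G → L be group homomorphisms with f(g) = k and h(g) = l. Then the following are equivalent: (1) there exist an abelian group D with a nonzero distinguished element d, and group homomorphisms f' : K → D, h' : L → D with f'(k) = d = h'(l) and f' ∘ f = h' ∘ h; (2) l ∉ h(ker f) and k ∉ f(ker h). -/
import Mathlib


theorem stmt0 {G K L : Type} [AddCommGroup G] [AddCommGroup K] [AddCommGroup L]
    (g : G) (k : K) (l : L) (hg : g ≠ 0) (hk : k ≠ 0) (hl : l ≠ 0)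
    (f : G →+ K) (h : G →+ L) (hfg : f g = k) (hhg : h g = l) :
    (∃ (D : Type) (_ : AddCommGroup D) (d : D) (f' : K →+ D) (h' : L →+ D),
        d ≠ 0 ∧ f' k = d ∧ h' l = d ∧ f'.comp f = h'.comp h) ↔
    (l ∉ f.ker.map h ∧ k ∉ h.ker.map f) := by
  constructor
  · rintro ⟨D, _, d, f', h', hd, hf'k, hh'l, hcomm⟩
    constructor
    · rintro ⟨a, ha, rfl⟩
      apply hd
      rw [← hh'l]
      have : h'.comp h a = f'.comp f a := (congrArg (· a) hcomm).symm
      simp only [AddMonoidHom.comp_apply] at this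
      rw [this, ha, map_zero]
    · rintro ⟨a, ha, rfl⟩
      apply hd
      rw [← hf'k]
      have : f'.comp f a = h'.comp h a := congrArg (· a) hcomm
      simp only [AddMonoidHom.comp_apply] at this
      rw [this, ha, map_zero]
  · rintro ⟨h1, h2⟩
    set H : AddSubgroup (K × L) := (f.prod (-h)).range with hH
    refine ⟨(K × L) ⧸ H, inferInstance, QuotientAddGroup.mk (k, 0),
      (QuotientAddGroup.mk' H).comp (AddMonoidHom.inl K L),
      (QuotientAddGroup.mk' H).comp (AddMonoidHom.inr K L), ?_, rfl, ?_, ?_⟩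
    · intro h0
      rw [QuotientAddGroup.eq_zero_iff] at h0
      obtain ⟨a, ha⟩ := h0
      apply h2
      have h1 : f a = k := congrArg Prod.fst ha
      have h2' : -h a = 0 := congrArg Prod.snd ha
      exact ⟨a, by simpa using h2', h1⟩
    · simp only [AddMonoidHom.comp_apply, AddMonoidHom.inr_apply, QuotientAddGroup.mk'_apply]
      rw [QuotientAddGroup.eq]
      exact ⟨g, by simp [hfg, hhg]⟩
    · ext a
      simp only [AddMonoidHom.comp_apply, AddMonoidHom.inl_apply, AddMonoidHom.inr_apply,
        QuotientAddGroup.mk'_apply]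
      rw [QuotientAddGroup.eq]
      exact ⟨-a, by simp⟩
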